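/- Let (a_m(x), b_m(x)) be the symmetric decomposition of Q_m(x), so that Q_m(x) = a_m(x) + x b_m(x), where a_m(x) = (Q_m(x) − x^{m+1} Q_m(1/x))/(1−x) and b_m(x) = (Q_m(x) − x^m Q_m(1/x))/(x−1). Then for all m ≥ 0: (1−x) a_{m+1}(x) = −2(1+x)(mx − 2m + x − 1) a_m(x) − 2x(1+x)^2 a_m'(x) + x(4mx − x − 3) b_m(x) − 4x^2(1+x) b_m'(x). -/

import Mathlib

open Polynomial


private lemma eval_reflect (f : Polynomial ℝ) (N : ℕ) (x : ℝ) (hx : x ≠ 0)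
    (hf : f.natDegree ≤ N) : eval x (reflect N f) = x ^ N * eval x⁻¹ f := by
  letI : Invertible (x⁻¹) := invertibleOfNonzero (inv_ne_zero hx)
  have h := eval₂_reflect_mul_pow (RingHom.id ℝ) x⁻¹ N f hf
  rw [invOf_eq_inv, inv_inv] at h
  have h' : eval x (reflect N f) * (x⁻¹) ^ N = eval x⁻¹ f := h
  calc eval x (reflect N f) = (eval x (reflect N f) * (x⁻¹) ^ N) * x ^ N := by
        rw [mul_assoc, ← mul_pow, inv_mul_cancel₀ hx, one_pow, mul_one]
    _ = x ^ N * eval x⁻¹ f := by rw [h']; ring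

private lemma eval_deriv_reflect (f : Polynomial ℝ) (N : ℕ) (x : ℝ) (hx : x ≠ 0)
    (hf : f.natDegree ≤ N) :
    x * eval x (derivative (reflect N f)) =
      (N : ℝ) * (x ^ N * eval x⁻¹ f) - x ^ N * x⁻¹ * eval x⁻¹ (derivative f) := by
  have h1 : HasDerivAt (fun y : ℝ => eval y (reflect N f))
      (eval x (derivative (reflect N f))) x := Polynomial.hasDerivAt _ _
  have hcomp : HasDerivAt (fun y : ℝ => eval y⁻¹ f)
      (eval x⁻¹ (derivative f) * (-(x ^ 2)⁻¹)) x :=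
    (f.hasDerivAt x⁻¹).comp x (hasDerivAt_inv hx)
  have h2 : HasDerivAt (fun y : ℝ => y ^ N * eval y⁻¹ f)
      ((N : ℝ) * x ^ (N - 1) * eval x⁻¹ f + x ^ N * (eval x⁻¹ (derivative f) * (-(x ^ 2)⁻¹))) x :=
    (hasDerivAt_pow N x).mul hcomp
  have heq : (fun y : ℝ => eval y (reflect N f)) =ᶠ[nhds x] fun y => y ^ N * eval y⁻¹ f := by
    filter_upwards [isOpen_compl_singleton.mem_nhds (show x ∈ ({(0:ℝ)}ᶜ : Set ℝ) from hx)]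
      with y hy
    exact eval_reflect f N y hy hf
  have h2' : HasDerivAt (fun y : ℝ => eval y (reflect N f))
      ((N : ℝ) * x ^ (N - 1) * eval x⁻¹ f + x ^ N * (eval x⁻¹ (derivative f) * (-(x ^ 2)⁻¹))) x :=
    h2.congr_of_eventuallyEq heq
  have hu := h1.unique h2'
  rw [hu]
  rcases N with _ | k
  · simp; field_simp
  · simp only [Nat.add_sub_cancel, Nat.cast_add, Nat.cast_one]
    field_simp
    ring

private lemma deg_step (q : Polynomial ℝ) (m : ℕ) (hq : q.natDegree ≤ m) :
    ((2 * (m : Polynomial ℝ) + 1) * (2 + 3 * X) * q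
      - 2 * X * (1 + X) * derivative q).natDegree ≤ m + 1 := by
  apply (natDegree_sub_le _ _).trans
  apply max_le
  · calc ((2 * (m : Polynomial ℝ) + 1) * (2 + 3 * X) * q).natDegree
        ≤ ((2 * (m : Polynomial ℝ) + 1) * (2 + 3 * X)).natDegree + q.natDegree :=
          natDegree_mul_le
      _ ≤ 1 + m := by
          gcongr
          compute_degree
      _ ≤ m + 1 := by omega
  · rcases eq_or_ne (derivative q) 0 with h | h
    · simp [h]
    · have hm : 1 ≤ m := by
        by_contra hm
        have : q.natDegree = 0 := by omega
        exact h (by rw [Polynomial.eq_C_of_natDegree_le_zero this.le, derivative_C])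
      calc (2 * X * (1 + X) * derivative q).natDegree
          ≤ (2 * X * (1 + X)).natDegree + (derivative q).natDegree := natDegree_mul_le
        _ ≤ 2 + (m - 1) := by
            gcongr
            · compute_degree
            · exact (natDegree_derivative_le q).trans (Nat.sub_le_sub_right hq 1)
        _ ≤ m + 1 := by omega

private lemma reflect_rec (q : Polynomial ℝ) (m : ℕ) (hq : q.natDegree ≤ m) :
    reflect (m + 1) ((2 * (m : Polynomial ℝ) + 1) * (2 + 3 * X) * q
        - 2 * X * (1 + X) * derivative q) =
      (2 * (m : Polynomial ℝ) + 1) * (3 + 2 * X) * reflect m q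
        - 2 * (m : Polynomial ℝ) * (1 + X) * reflect m q
        + 2 * X * (1 + X) * derivative (reflect m q) := by
  apply eq_of_infinite_eval_eq
  apply Set.Infinite.mono (s := ({(0 : ℝ)}ᶜ : Set ℝ))
    (t := _) ?_ ((Set.finite_singleton (0 : ℝ)).infinite_compl)
  intro x hx
  have hx : x ≠ 0 := hx
  simp only [Set.mem_setOf_eq]
  have e1 := eval_reflect _ (m + 1) x hx (deg_step q m hq)
  have e2 := eval_reflect q m x hx hq
  have e3 := eval_deriv_reflect q m x hx hq
  rw [e1]
  simp only [eval_add, eval_sub, eval_mul, eval_ofNat, eval_natCast, eval_X, eval_one,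
    eval_pow] at *
  rw [e2]
  have hD : eval x (derivative (reflect m q)) =
      ((m : ℝ) * (x ^ m * eval x⁻¹ q) - x ^ m * x⁻¹ * eval x⁻¹ (derivative q)) / x := by
    rw [eq_div_iff hx]
    linear_combination e3
  rw [hD]
  field_simp
  ring

theorem a_recurrence (Q a b : ℕ → Polynomial ℝ) (h0 : Q 0 = 1)
    (hrec : ∀ m : ℕ, Q (m + 1) =
      (2 * (m : Polynomial ℝ) + 1) * (2 + 3 * Polynomial.X) * Q m
        - 2 * Polynomial.X * (1 + Polynomial.X) * Polynomial.derivative (Q m))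
    (ha : ∀ m : ℕ, (1 - Polynomial.X) * a m = Q m - Polynomial.X * Polynomial.reflect m (Q m))
    (hb : ∀ m : ℕ, (Polynomial.X - 1) * b m = Q m - Polynomial.reflect m (Q m)) :
    ∀ m : ℕ, (1 - Polynomial.X) * a (m + 1) =
      -2 * (1 + Polynomial.X) *
          ((m : Polynomial ℝ) * Polynomial.X - 2 * (m : Polynomial ℝ) + Polynomial.X - 1) * a m
        - 2 * Polynomial.X * (1 + Polynomial.X) ^ 2 * Polynomial.derivative (a m)
        + Polynomial.X * (4 * (m : Polynomial ℝ) * Polynomial.X - Polynomial.X - 3) * b m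
        - 4 * Polynomial.X ^ 2 * (1 + Polynomial.X) * Polynomial.derivative (b m) := by
  have hqdeg : ∀ m, (Q m).natDegree ≤ m := by
    intro m
    induction m with
    | zero => simp [h0]
    | succ k ih => rw [hrec k]; exact deg_step (Q k) k ih
  intro m
  have key : reflect (m + 1) (Q (m + 1)) =
      (2 * (m : Polynomial ℝ) + 1) * (3 + 2 * X) * reflect m (Q m)
        - 2 * (m : Polynomial ℝ) * (1 + X) * reflect m (Q m)
        + 2 * X * (1 + X) * derivative (reflect m (Q m)) := by
    rw [hrec m]; exact reflect_rec (Q m) m (hqdeg m)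
  have h1 := ha m
  have h2 := hb m
  have h3 := congrArg derivative h1
  have h4 := congrArg derivative h2
  simp only [derivative_mul, derivative_sub, derivative_one, derivative_X] at h3 h4
  have h2' : (1 - X) * b m = reflect m (Q m) - Q m := by linear_combination -h2
  have h3' : (1 - X) * derivative (a m) =
      derivative (Q m) - reflect m (Q m) - X * derivative (reflect m (Q m)) + a m := by
    linear_combination h3
  have h4' : (1 - X) * derivative (b m) =
      derivative (reflect m (Q m)) - derivative (Q m) + b m := by
    linear_combination -h4
  have hmain := ha (m + 1)
  rw [key, hrec m] at hmain
  rw [hmain]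
  have hs0 : (1 - X : Polynomial ℝ) ≠ 0 := fun h =>
    one_ne_zero (α := ℝ) (by simpa using congrArg (eval 0) h)
  apply mul_left_cancel₀ (pow_ne_zero 2 hs0)
  linear_combination
    (-((-2 * (1 + X) * ((m : Polynomial ℝ) * X - 2 * (m : Polynomial ℝ) + X - 1)) * (1 - X)
        + (-2 * X * (1 + X) ^ 2))) * h1
    + (-((X * (4 * (m : Polynomial ℝ) * X - X - 3)) * (1 - X)
        + (-4 * X ^ 2 * (1 + X)))) * h2'
    + (-((-2 * X * (1 + X) ^ 2) * (1 - X))) * h3'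
    + (-((-4 * X ^ 2 * (1 + X)) * (1 - X))) * h4'
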